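/- (Yang-Baxter equation for the vector KP R-matrix.) For real parameters p₁,p₂,p₃,q₁,q₂,q₃ with p_i ≠ q_j whenever i < j, define for i < j the 3×3 real matrix r_{ij} which equals the identity except that its entries at positions (i,i), (i,j), (j,i), (j,j) are, respectively, (p_i−p_j)/(p_i−q_j), (p_i−q_i)/(p_i−q_j), (p_j−q_j)/(p_i−q_j), (q_i−q_j)/(p_i−q_j). Then r_{12} r_{13} r_{23} = r_{23} r_{13} r_{12}. -/

import Mathlib

open Matrix
set_option maxHeartbeats 2000000

/-- The embedding of the 2×2 R-matrix `R(p_i,q_i;p_j,q_j)` into the 3×3 identity at rows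
and columns `1,2` (positions `12`). -/
noncomputable def r12 (p₁ q₁ p₂ q₂ : ℝ) : Matrix (Fin 3) (Fin 3) ℝ :=
  !![(p₁ - p₂) / (p₁ - q₂), (p₁ - q₁) / (p₁ - q₂), 0;
     (p₂ - q₂) / (p₁ - q₂), (q₁ - q₂) / (p₁ - q₂), 0;
     0, 0, 1]

/-- The embedding at positions `13`. -/
noncomputable def r13 (p₁ q₁ p₃ q₃ : ℝ) : Matrix (Fin 3) (Fin 3) ℝ :=
  !![(p₁ - p₃) / (p₁ - q₃), 0, (p₁ - q₁) / (p₁ - q₃);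
     0, 1, 0;
     (p₃ - q₃) / (p₁ - q₃), 0, (q₁ - q₃) / (p₁ - q₃)]

/-- The embedding at positions `23`. -/
noncomputable def r23 (p₂ q₂ p₃ q₃ : ℝ) : Matrix (Fin 3) (Fin 3) ℝ :=
  !![1, 0, 0;
     0, (p₂ - p₃) / (p₂ - q₃), (p₂ - q₂) / (p₂ - q₃);
     0, (p₃ - q₃) / (p₂ - q₃), (q₂ - q₃) / (p₂ - q₃)]

/-- Yang–Baxter equation for the vector KP R-matrix. -/
theorem stmt_12 (p₁ p₂ p₃ q₁ q₂ q₃ : ℝ)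
    (h12 : p₁ ≠ q₂) (h13 : p₁ ≠ q₃) (h23 : p₂ ≠ q₃) :
    r12 p₁ q₁ p₂ q₂ * r13 p₁ q₁ p₃ q₃ * r23 p₂ q₂ p₃ q₃
      = r23 p₂ q₂ p₃ q₃ * r13 p₁ q₁ p₃ q₃ * r12 p₁ q₁ p₂ q₂ := by
  have h12' : p₁ - q₂ ≠ 0 := sub_ne_zero.mpr h12
  have h13' : p₁ - q₃ ≠ 0 := sub_ne_zero.mpr h13
  have h23' : p₂ - q₃ ≠ 0 := sub_ne_zero.mpr h23
  set a := p₁ - q₂ with ha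
  set b := p₁ - q₃ with hb
  set c := p₂ - q₃ with hc
  have hA : r12 p₁ q₁ p₂ q₂ = a⁻¹ • !![p₁ - p₂, p₁ - q₁, 0; p₂ - q₂, q₁ - q₂, 0; 0, 0, a] := by
    unfold r12
    ext i j
    fin_cases i <;> fin_cases j <;>
      simp [Matrix.smul_apply, Matrix.vecHead, Matrix.vecTail, div_eq_inv_mul, mul_comm] <;> simp [ha, h12, sub_ne_zero.mpr h12]
  have hB : r13 p₁ q₁ p₃ q₃ = b⁻¹ • !![p₁ - p₃, 0, p₁ - q₁; 0, b, 0; p₃ - q₃, 0, q₁ - q₃] := by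
    unfold r13
    ext i j
    fin_cases i <;> fin_cases j <;>
      simp [Matrix.smul_apply, Matrix.vecHead, Matrix.vecTail, div_eq_inv_mul, mul_comm] <;> simp [hb, h13, sub_ne_zero.mpr h13]
  have hC : r23 p₂ q₂ p₃ q₃ = c⁻¹ • !![c, 0, 0; 0, p₂ - p₃, p₂ - q₂; 0, p₃ - q₃, q₂ - q₃] := by
    unfold r23
    ext i j
    fin_cases i <;> fin_cases j <;>
      simp [Matrix.smul_apply, Matrix.vecHead, Matrix.vecTail, div_eq_inv_mul, mul_comm] <;> simp [hc, h23, sub_ne_zero.mpr h23]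
  rw [hA, hB, hC]
  rw [Matrix.smul_mul, Matrix.mul_smul, Matrix.smul_mul, Matrix.mul_smul, Matrix.smul_mul,
    Matrix.smul_mul, Matrix.mul_smul, Matrix.mul_smul, Matrix.smul_mul, Matrix.smul_mul]
  rw [smul_smul, smul_smul, smul_smul, smul_smul]
  congr 1
  · ring
  rw [Matrix.mul_fin_three, Matrix.mul_fin_three, Matrix.mul_fin_three, Matrix.mul_fin_three]
  ext i j
  fin_cases i <;> fin_cases j <;>
    simp only [Matrix.cons_val', Matrix.cons_val_zero, Matrix.cons_val_one, Matrix.head_cons,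
      Matrix.empty_val', Matrix.cons_val_fin_one, Matrix.of_apply, Matrix.head_fin_const,
      Fin.mk_zero, Fin.mk_one, ha, hb, hc] <;> ring
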